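/- Let G be a finite group. Any two non-isolated vertices of the complement of the enhanced power graph of G are joined by a path of length at most 3 within the non-isolated vertices; that is, the induced subgraph on non-isolated vertices is connected of diameter at most 3. -/

import Mathlib

/-- The enhanced power graph of a group: distinct `x`, `y` are adjacent iff they lie in a
common cyclic subgroup. -/
def enhancedPowerGraph (G : Type*) [Group G] : SimpleGraph G where
  Adj x y := x ≠ y ∧ ∃ z : G, x ∈ Subgroup.zpowers z ∧ y ∈ Subgroup.zpowers z
  symm := ⟨fun x y ⟨h, z, hx, hy⟩ => ⟨h.symm, z, hy, hx⟩⟩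
  loopless := ⟨fun x h => h.1 rfl⟩

/-- The power graph of a group: distinct `x`, `y` are adjacent iff one is a power of the
other. -/
def powerGraph (G : Type*) [Group G] : SimpleGraph G where
  Adj x y := x ≠ y ∧ (x ∈ Subgroup.zpowers y ∨ y ∈ Subgroup.zpowers x)
  symm := ⟨fun x y ⟨h, hz⟩ => ⟨h.symm, hz.symm⟩⟩
  loopless := ⟨fun x h => h.1 rfl⟩

/-- An independent set: a set of pairwise non-adjacent vertices. -/
def SimpleGraph.IsIndepSet' {V : Type*} (Γ : SimpleGraph V) (s : Set V) : Prop :=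
  s.Pairwise fun x y => ¬ Γ.Adj x y

lemma compl_enhanced_adj {G : Type*} [Group G] {x y : G} :
    ((enhancedPowerGraph G)ᶜ).Adj x y ↔
      x ≠ y ∧ ¬ ∃ z : G, x ∈ Subgroup.zpowers z ∧ y ∈ Subgroup.zpowers z := by
  rw [SimpleGraph.compl_adj]
  show x ≠ y ∧ ¬(x ≠ y ∧ ∃ z : G, x ∈ Subgroup.zpowers z ∧ y ∈ Subgroup.zpowers z) ↔ _
  constructor
  · rintro ⟨hne, h⟩
    exact ⟨hne, fun he => h ⟨hne, he⟩⟩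
  · rintro ⟨hne, h⟩
    exact ⟨hne, fun he => h he.2⟩

/-- a maximal cyclic subgroup containing a given cyclic subgroup -/
lemma exists_maximal_zpowers {G : Type*} [Group G] [Finite G] (z : G) :
    ∃ n : G, z ∈ Subgroup.zpowers n ∧
      ∀ w : G, n ∈ Subgroup.zpowers w → Subgroup.zpowers w = Subgroup.zpowers n := by
  classical
  set T : Set (Subgroup G) :=
    {H | (∃ w : G, H = Subgroup.zpowers w) ∧ Subgroup.zpowers z ≤ H} with hT
  obtain ⟨H, hHT, hmax⟩ := Set.Finite.exists_maximalFor id T (Set.toFinite T)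
    ⟨Subgroup.zpowers z, ⟨z, rfl⟩, le_refl _⟩
  obtain ⟨⟨n, rfl⟩, hzle⟩ := hHT
  refine ⟨n, hzle (Subgroup.mem_zpowers z), fun w hw => ?_⟩
  have hle : Subgroup.zpowers n ≤ Subgroup.zpowers w := Subgroup.zpowers_le.2 hw
  exact le_antisymm (hmax ⟨⟨w, rfl⟩, hzle.trans hle⟩ hle) hle

/-- The induced subgraph of the complement of the enhanced power graph on the set of
non-isolated vertices is connected of diameter at most 3. -/
theorem compl_enhancedPowerGraph_preconnected_diam_le_three
    {G : Type*} [Group G] [Finite G] :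
    (((enhancedPowerGraph G)ᶜ).induce
        {x : G | ∃ y, ((enhancedPowerGraph G)ᶜ).Adj x y}).Preconnected ∧
      ∀ a b : {x : G | ∃ y, ((enhancedPowerGraph G)ᶜ).Adj x y},
        (((enhancedPowerGraph G)ᶜ).induce
            {x : G | ∃ y, ((enhancedPowerGraph G)ᶜ).Adj x y}).dist a b ≤ 3 := by
  set Γ : SimpleGraph G := (enhancedPowerGraph G)ᶜ with hΓ
  set S : Set G := {x : G | ∃ y, Γ.Adj x y} with hS
  have key : ∀ a b : S, ∃ p : (Γ.induce S).Walk a b, p.length ≤ 3 := by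
    rintro ⟨a, ha⟩ ⟨b, hb⟩
    by_cases hab : a = b
    · subst hab; exact ⟨SimpleGraph.Walk.nil, by simp⟩
    by_cases h1 : Γ.Adj a b
    · exact ⟨SimpleGraph.Walk.cons
        (show (Γ.induce S).Adj ⟨a, ha⟩ ⟨b, hb⟩ from h1) SimpleGraph.Walk.nil, by simp⟩
    obtain ⟨a', ha'⟩ := id ha
    obtain ⟨b', hb'⟩ := id hb
    have ha'S : a' ∈ S := ⟨a, ha'.symm⟩
    have hb'S : b' ∈ S := ⟨b, hb'.symm⟩
    by_cases h2 : Γ.Adj a' b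
    · exact ⟨SimpleGraph.Walk.cons
        (show (Γ.induce S).Adj ⟨a, ha⟩ ⟨a', ha'S⟩ from ha') (SimpleGraph.Walk.cons
        (show (Γ.induce S).Adj ⟨a', ha'S⟩ ⟨b, hb⟩ from h2) SimpleGraph.Walk.nil), by simp⟩
    -- a' and b lie in a common cyclic subgroup ⟨z⟩
    have ha'b : a' ≠ b := by rintro rfl; exact h1 ha'
    have hz : ∃ z : G, a' ∈ Subgroup.zpowers z ∧ b ∈ Subgroup.zpowers z := by
      by_contra h
      exact h2 (compl_enhanced_adj.2 ⟨ha'b, h⟩)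
    obtain ⟨z, ha'z, hbz⟩ := hz
    obtain ⟨n, hzn, hnmax⟩ := exists_maximal_zpowers z
    have ha'n : a' ∈ Subgroup.zpowers n := Subgroup.zpowers_le.2 hzn ha'z
    have hbn : b ∈ Subgroup.zpowers n := Subgroup.zpowers_le.2 hzn hbz
    have haa' := compl_enhanced_adj.1 ha'
    have hbb' := compl_enhanced_adj.1 hb'
    have han : Γ.Adj a n := by
      refine compl_enhanced_adj.2 ⟨?_, ?_⟩
      · intro h
        exact haa'.2 ⟨n, h ▸ Subgroup.mem_zpowers n, ha'n⟩
      · rintro ⟨w, haw, hnw⟩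
        rw [hnmax w hnw] at haw
        exact haa'.2 ⟨n, haw, ha'n⟩
    have hnb' : Γ.Adj n b' := by
      refine compl_enhanced_adj.2 ⟨?_, ?_⟩
      · intro h
        exact hbb'.2 ⟨n, hbn, h ▸ Subgroup.mem_zpowers n⟩
      · rintro ⟨w, hnw, hb'w⟩
        rw [hnmax w hnw] at hb'w
        exact hbb'.2 ⟨n, hbn, hb'w⟩
    have hnS : n ∈ S := ⟨a, han.symm⟩
    exact ⟨SimpleGraph.Walk.cons (show (Γ.induce S).Adj ⟨a, ha⟩ ⟨n, hnS⟩ from han)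
      (SimpleGraph.Walk.cons (show (Γ.induce S).Adj ⟨n, hnS⟩ ⟨b', hb'S⟩ from hnb')
        (SimpleGraph.Walk.cons (show (Γ.induce S).Adj ⟨b', hb'S⟩ ⟨b, hb⟩ from hb'.symm)
          SimpleGraph.Walk.nil)), by simp⟩
  constructor
  · intro a b
    obtain ⟨p, _⟩ := key a b
    exact ⟨p⟩
  · intro a b
    obtain ⟨p, hp⟩ := key a b
    exact (SimpleGraph.dist_le p).trans hp
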